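/- Let G be a group and t, w ∈ G. If the family {t^i w t^{-i} : i ∈ ℕ} freely generates a free subgroup of G, then the family {t^i w t^{-i} : i ∈ ℤ} freely generates a free subgroup of G. -/

import Mathlib

/-- if `{t^i w t^{-i} : i ∈ ℕ}` freely generates a free subgroup,
then so does `{t^i w t^{-i} : i ∈ ℤ}`. -/
theorem stmt_1 {G : Type*} [Group G] (t w : G)
    (h : Function.Injective
      (FreeGroup.lift (fun i : ℕ => t ^ i * w * (t ^ i)⁻¹) : FreeGroup ℕ →* G)) :
    Function.Injective
      (FreeGroup.lift (fun i : ℤ => t ^ i * w * (t ^ i)⁻¹) : FreeGroup ℤ →* G) := by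
  set fZ : ℤ → G := fun i : ℤ => t ^ i * w * (t ^ i)⁻¹ with hfZ
  set fN : ℕ → G := fun i : ℕ => t ^ i * w * (t ^ i)⁻¹ with hfN
  rw [injective_iff_map_eq_one]
  intro x hx
  set L : List (ℤ × Bool) := x.toWord with hL
  set n : ℕ := (L.map (fun p => p.1.natAbs)).sum with hn
  have hge : ∀ p ∈ L, 0 ≤ p.1 + n := by
    intro p hp
    have h1 : (p.1.natAbs : ℕ) ≤ n := by
      apply List.single_le_sum (fun a _ => Nat.zero_le a)
      exact List.mem_map.2 ⟨p, hp, rfl⟩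
    omega
  set g : ℤ → ℕ := fun i => (i + n).toNat with hg
  -- the shifted word in FreeGroup ℕ
  have key1 : FreeGroup.lift fN (FreeGroup.map g x)
      = t ^ n * FreeGroup.lift fZ x * (t ^ n)⁻¹ := by
    conv_lhs => rw [← FreeGroup.mk_toWord (x := x)]
    conv_rhs => rw [← FreeGroup.mk_toWord (x := x)]
    rw [FreeGroup.map.mk, FreeGroup.lift_mk, FreeGroup.lift_mk, ← hL]
    rw [List.map_map]
    have key : ((L.map fun p => cond p.2 (fZ p.1) (fZ p.1)⁻¹).map
            fun a => t ^ n * a * (t ^ n)⁻¹).prod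
        = t ^ n * (L.map fun p => cond p.2 (fZ p.1) (fZ p.1)⁻¹).prod * (t ^ n)⁻¹ := by
      have := map_list_prod (MulAut.conj (t ^ n)).toMonoidHom
        (L.map fun p => cond p.2 (fZ p.1) (fZ p.1)⁻¹)
      simpa [MulAut.conj] using this.symm
    rw [← key, List.map_map]
    congr 1
    apply List.map_congr_left
    rintro ⟨i, b⟩ hp
    have hnn := hge ⟨i, b⟩ hp
    have hpow : t ^ (g i) = t ^ (i + n) := by
      rw [hg]
      rw [← zpow_natCast, Int.toNat_of_nonneg hnn]
    have base : fN (g i) = t ^ n * fZ i * (t ^ n)⁻¹ := by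
      simp only [hfN, hfZ, hpow, zpow_add, zpow_natCast]
      group
    cases b <;> simp [Function.comp, base, mul_assoc]
  have h1 : FreeGroup.map g x = 1 := by
    apply h
    rw [key1, hx, map_one]
    group
  -- map back
  have h2 : FreeGroup.map (fun j : ℕ => (j : ℤ) - n) (FreeGroup.map g x) = x := by
    conv_lhs => rw [← FreeGroup.mk_toWord (x := x)]
    conv_rhs => rw [← FreeGroup.mk_toWord (x := x)]
    rw [FreeGroup.map.mk, FreeGroup.map.mk, ← hL, List.map_map]
    congr 1
    conv_rhs => rw [← List.map_id L]
    apply List.map_congr_left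
    intro p hp
    have hnn := hge p hp
    simp only [Function.comp, hg, id]
    rw [Int.toNat_of_nonneg hnn]
    simp
  rw [h1, map_one] at h2
  exact h2.symm
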